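/- Let m : ℝ → (0,1] be even, equal to 1 on [−N,N], nonincreasing on [0,∞), and satisfying the Lipschitz-type bound |m(ξ)−m(η)| ≤ C|ξ−η| sup_{θ between ξ,η} |m'(θ)| with |m'(θ)| ≤ C m(θ)/⟨θ⟩. If ξ₁+ξ₂+ξ₃ = 0 and |ξ₁| ≥ |ξ₂| ≥ |ξ₃|, then |m(ξ₁)m(ξ₂+ξ₃)(ξ₂+ξ₃) + m(ξ₂)m(ξ₁+ξ₃)(ξ₁+ξ₃) + m(ξ₃)m(ξ₁+ξ₂)(ξ₁+ξ₂)| ≤ C' |ξ₃| m(ξ₃)², i.e., the M₃ symbol is bounded by |ξ₃|m²(ξ₃). -/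

import Mathlib

/-- `M₃` symbol bound: for the I-method multiplier `m`, if `ξ₁+ξ₂+ξ₃ = 0` and
`|ξ₁| ≥ |ξ₂| ≥ |ξ₃|`, then `|[m(ξ₁)m(ξ₂+ξ₃)(ξ₂+ξ₃)]_{sym}| ≲ |ξ₃| m(ξ₃)²`. -/
theorem M3_pointwise_bound (C : ℝ) (hC : 0 < C) :
    ∃ C' : ℝ, 0 < C' ∧ ∀ N : ℝ, 0 < N → ∀ m : ℝ → ℝ,
      (∀ ξ : ℝ, 0 < m ξ ∧ m ξ ≤ 1) →
      (∀ ξ : ℝ, m (-ξ) = m ξ) →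
      (∀ ξ : ℝ, |ξ| ≤ N → m ξ = 1) →
      AntitoneOn m (Set.Ici 0) →
      (∀ θ : ℝ, |deriv m θ| ≤ C * m θ / Real.sqrt (1 + θ^2)) →
      (∀ ξ η : ℝ, |m ξ - m η| ≤ C * |ξ - η| * sSup ((fun θ => |deriv m θ|) '' Set.uIcc ξ η)) →
      ∀ ξ₁ ξ₂ ξ₃ : ℝ, ξ₁ + ξ₂ + ξ₃ = 0 → |ξ₂| ≤ |ξ₁| → |ξ₃| ≤ |ξ₂| →
        |m ξ₁ * m (ξ₂ + ξ₃) * (ξ₂ + ξ₃) + m ξ₂ * m (ξ₁ + ξ₃) * (ξ₁ + ξ₃)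
          + m ξ₃ * m (ξ₁ + ξ₂) * (ξ₁ + ξ₂)|
          ≤ C' * |ξ₃| * (m ξ₃)^2 := by
  refine ⟨2 * C ^ 2 + 1, by positivity, ?_⟩
  intro N hN m hpos heven hone hanti hderiv hLip ξ₁ ξ₂ ξ₃ hsum h12 h23
  have habs : ∀ ξ : ℝ, m |ξ| = m ξ := by
    intro ξ
    rcases abs_choice ξ with h | h
    · rw [h]
    · rw [h]; exact heven ξ
  have hm1 := (hpos ξ₁).1
  have hm2 := (hpos ξ₂).1
  have hm3 := (hpos ξ₃).1
  have h1 : ξ₂ + ξ₃ = -ξ₁ := by linarith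
  have h2 : ξ₁ + ξ₃ = -ξ₂ := by linarith
  have h3 : ξ₁ + ξ₂ = -ξ₃ := by linarith
  rw [h1, h2, h3, heven, heven, heven]
  have key : m ξ₁ * m ξ₁ * -ξ₁ + m ξ₂ * m ξ₂ * -ξ₂ + m ξ₃ * m ξ₃ * -ξ₃
      = -(((m ξ₂) ^ 2 - (m ξ₁) ^ 2) * ξ₂ + ((m ξ₃) ^ 2 - (m ξ₁) ^ 2) * ξ₃) := by
    have hξ : ξ₁ = -ξ₂ - ξ₃ := by linarith
    rw [hξ]; ring
  rw [key, abs_neg]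
  -- monotonicity of m in |ξ|
  have hma : ∀ x y : ℝ, |x| ≤ |y| → m y ≤ m x := by
    intro x y h
    rw [← habs x, ← habs y]
    exact hanti (abs_nonneg x) (le_trans (abs_nonneg x) h) h
  have hm12 : m ξ₁ ≤ m ξ₂ := hma _ _ h12
  have hm23 : m ξ₂ ≤ m ξ₃ := hma _ _ h23
  have hm13 : m ξ₁ ≤ m ξ₃ := le_trans hm12 hm23
  -- second term bound
  have hT2 : |((m ξ₃) ^ 2 - (m ξ₁) ^ 2) * ξ₃| ≤ |ξ₃| * (m ξ₃) ^ 2 := by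
    rw [abs_mul]
    have hfac : |(m ξ₃) ^ 2 - (m ξ₁) ^ 2| ≤ (m ξ₃) ^ 2 := by
      rw [abs_of_nonneg (by nlinarith)]
      nlinarith
    calc |(m ξ₃) ^ 2 - (m ξ₁) ^ 2| * |ξ₃| ≤ (m ξ₃) ^ 2 * |ξ₃| :=
          mul_le_mul_of_nonneg_right hfac (abs_nonneg _)
      _ = |ξ₃| * (m ξ₃) ^ 2 := by ring
  -- Lipschitz estimate on |m ξ₁ - m ξ₂|
  have hab : |ξ₂| ≤ |ξ₁| := h12
  have hrtpos : (0 : ℝ) < Real.sqrt (1 + ξ₂ ^ 2) := Real.sqrt_pos.mpr (by positivity)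
  have hsup : sSup ((fun θ => |deriv m θ|) '' Set.uIcc (|ξ₁|) (|ξ₂|))
      ≤ C * m ξ₂ / Real.sqrt (1 + ξ₂ ^ 2) := by
    apply Real.sSup_le
    · rintro x ⟨θ, hθ, rfl⟩
      rw [Set.uIcc_of_ge hab] at hθ
      have hθb : |ξ₂| ≤ θ := hθ.1
      have hθ0 : (0 : ℝ) ≤ θ := le_trans (abs_nonneg _) hθb
      have hmθ : m θ ≤ m ξ₂ := by
        rw [← habs ξ₂]
        exact hanti (abs_nonneg ξ₂) hθ0 hθb
      have hsq : Real.sqrt (1 + ξ₂ ^ 2) ≤ Real.sqrt (1 + θ ^ 2) := by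
        apply Real.sqrt_le_sqrt
        have : ξ₂ ^ 2 ≤ θ ^ 2 := by nlinarith [abs_nonneg ξ₂, sq_abs ξ₂]
        linarith
      calc |deriv m θ| ≤ C * m θ / Real.sqrt (1 + θ ^ 2) := hderiv θ
        _ ≤ C * m ξ₂ / Real.sqrt (1 + ξ₂ ^ 2) := by
            apply div_le_div₀ (mul_nonneg hC.le hm2.le)
              (mul_le_mul_of_nonneg_left hmθ hC.le) hrtpos hsq
    · exact div_nonneg (mul_nonneg hC.le hm2.le) (Real.sqrt_nonneg _)
  have ha3 : |ξ₁| - |ξ₂| ≤ |ξ₃| := by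
    have hξ : ξ₁ = -(ξ₂ + ξ₃) := by linarith
    have : |ξ₁| ≤ |ξ₂| + |ξ₃| := by rw [hξ, abs_neg]; exact abs_add_le _ _
    linarith
  have hdiff : |m ξ₁ - m ξ₂| ≤ C * |ξ₃| * (C * m ξ₂ / Real.sqrt (1 + ξ₂ ^ 2)) := by
    have h := hLip (|ξ₁|) (|ξ₂|)
    rw [habs ξ₁, habs ξ₂] at h
    have hsupnn : 0 ≤ sSup ((fun θ => |deriv m θ|) '' Set.uIcc (|ξ₁|) (|ξ₂|)) := by
      apply Real.sSup_nonneg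
      rintro x ⟨θ, _, rfl⟩
      exact abs_nonneg _
    have habs3 : |(|ξ₁| - |ξ₂|)| ≤ |ξ₃| := by
      rw [abs_of_nonneg (by linarith)]
      exact ha3
    calc |m ξ₁ - m ξ₂|
        ≤ C * |(|ξ₁| - |ξ₂|)| * sSup ((fun θ => |deriv m θ|) '' Set.uIcc (|ξ₁|) (|ξ₂|)) := h
      _ ≤ C * |ξ₃| * (C * m ξ₂ / Real.sqrt (1 + ξ₂ ^ 2)) := by
          apply mul_le_mul (mul_le_mul_of_nonneg_left habs3 hC.le) hsup hsupnn
          exact mul_nonneg hC.le (abs_nonneg _)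
  have hrt : |ξ₂| ≤ Real.sqrt (1 + ξ₂ ^ 2) := by
    rw [← Real.sqrt_sq_eq_abs]
    exact Real.sqrt_le_sqrt (by linarith)
  have hE : C * m ξ₂ / Real.sqrt (1 + ξ₂ ^ 2) * |ξ₂| ≤ C * m ξ₂ := by
    rw [div_mul_eq_mul_div, div_le_iff₀ hrtpos]
    exact mul_le_mul_of_nonneg_left hrt (mul_nonneg hC.le hm2.le)
  have hdiff2 : |m ξ₁ - m ξ₂| * |ξ₂| ≤ C ^ 2 * |ξ₃| * m ξ₂ := by
    have hstep := mul_le_mul_of_nonneg_right hdiff (abs_nonneg ξ₂)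
    have h4 : C * |ξ₃| * (C * m ξ₂ / Real.sqrt (1 + ξ₂ ^ 2) * |ξ₂|) ≤ C * |ξ₃| * (C * m ξ₂) :=
      mul_le_mul_of_nonneg_left hE (mul_nonneg hC.le (abs_nonneg ξ₃))
    calc |m ξ₁ - m ξ₂| * |ξ₂|
        ≤ C * |ξ₃| * (C * m ξ₂ / Real.sqrt (1 + ξ₂ ^ 2)) * |ξ₂| := hstep
      _ = C * |ξ₃| * (C * m ξ₂ / Real.sqrt (1 + ξ₂ ^ 2) * |ξ₂|) := by ring
      _ ≤ C * |ξ₃| * (C * m ξ₂) := h4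
      _ = C ^ 2 * |ξ₃| * m ξ₂ := by ring
  have hT1 : |((m ξ₂) ^ 2 - (m ξ₁) ^ 2) * ξ₂| ≤ 2 * C ^ 2 * |ξ₃| * (m ξ₃) ^ 2 := by
    rw [abs_mul]
    have hfac : |(m ξ₂) ^ 2 - (m ξ₁) ^ 2| ≤ |m ξ₁ - m ξ₂| * (2 * m ξ₂) := by
      have hq : (m ξ₂) ^ 2 - (m ξ₁) ^ 2 = (m ξ₂ - m ξ₁) * (m ξ₂ + m ξ₁) := by ring
      rw [hq, abs_mul, abs_sub_comm]
      apply mul_le_mul_of_nonneg_left _ (abs_nonneg _)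
      rw [abs_of_pos (by linarith)]
      linarith
    calc |(m ξ₂) ^ 2 - (m ξ₁) ^ 2| * |ξ₂|
        ≤ |m ξ₁ - m ξ₂| * (2 * m ξ₂) * |ξ₂| := mul_le_mul_of_nonneg_right hfac (abs_nonneg _)
      _ = |m ξ₁ - m ξ₂| * |ξ₂| * (2 * m ξ₂) := by ring
      _ ≤ C ^ 2 * |ξ₃| * m ξ₂ * (2 * m ξ₂) := mul_le_mul_of_nonneg_right hdiff2 (by linarith)
      _ = 2 * C ^ 2 * |ξ₃| * (m ξ₂) ^ 2 := by ring
      _ ≤ 2 * C ^ 2 * |ξ₃| * (m ξ₃) ^ 2 :=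
          mul_le_mul_of_nonneg_left (by nlinarith) (by positivity)
  calc |((m ξ₂) ^ 2 - (m ξ₁) ^ 2) * ξ₂ + ((m ξ₃) ^ 2 - (m ξ₁) ^ 2) * ξ₃|
      ≤ |((m ξ₂) ^ 2 - (m ξ₁) ^ 2) * ξ₂| + |((m ξ₃) ^ 2 - (m ξ₁) ^ 2) * ξ₃| := abs_add_le _ _
    _ ≤ 2 * C ^ 2 * |ξ₃| * (m ξ₃) ^ 2 + |ξ₃| * (m ξ₃) ^ 2 := add_le_add hT1 hT2
    _ = (2 * C ^ 2 + 1) * |ξ₃| * (m ξ₃) ^ 2 := by ring
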